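/- Let n ≡ 1 (mod 4). Let A be the quotient of the free unital associative ℤ/2-algebra ⟨H,S,Y⟩ on three generators by the two-sided ideal generated by the elements HS + SH + 1, HY + YH, SY + YS + H^{n−1}Y², S², and H^{n+1}. Then the images in A of the monomials H^a S^ε Y^k, for 0 ≤ a ≤ n, ε ∈ {0,1}, k ≥ 0, form a basis of A as a ℤ/2-vector space. (This is the additive structure underlying the presentation of the path homology algebra ℍ_·(P_n) for n ≡ 1 (mod 4), where H, S, Y have degrees −1, 1, n respectively.) -/
import Mathlib


/-- The free unital associative `ℤ/2`-algebra `⟨H, S, Y⟩` on three generators. -/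
abbrev FreeHSY : Type := FreeAlgebra (ZMod 2) (Fin 3)

/-- The generator `H`. -/
noncomputable def genH : FreeHSY := FreeAlgebra.ι (ZMod 2) 0
/-- The generator `S`. -/
noncomputable def genS : FreeHSY := FreeAlgebra.ι (ZMod 2) 1
/-- The generator `Y`. -/
noncomputable def genY : FreeHSY := FreeAlgebra.ι (ZMod 2) 2

/-- The relations `HS + SH + 1 = 0`, `HY + YH = 0`, `SY + YS + H^{n−1}Y² = 0`, `S² = 0`,
`H^{n+1} = 0` (for `n ≡ 1 (mod 4)`); quotienting by this relation is quotienting by the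
two-sided ideal generated by the corresponding elements. -/
inductive pathRel (n : ℕ) : FreeHSY → FreeHSY → Prop
  | hs : pathRel n (genH * genS + genS * genH + 1) 0
  | hy : pathRel n (genH * genY + genY * genH) 0
  | sy : pathRel n (genS * genY + genY * genS + genH ^ (n - 1) * genY ^ 2) 0
  | s2 : pathRel n (genS * genS) 0
  | hpow : pathRel n (genH ^ (n + 1)) 0

/-- The quotient algebra `A = ⟨H,S,Y⟩ / (HS+SH+1, HY+YH, SY+YS+H^{n−1}Y², S², H^{n+1})`. -/
abbrev PathAlg (n : ℕ) : Type := RingQuot (pathRel n)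

-- char 2 add-self
lemma addSelf {M : Type*} [AddCommMonoid M] [Module (ZMod 2) M] (x : M) : x + x = 0 := by
  rw [← two_smul (ZMod 2)]
  rw [show (2 : ZMod 2) = 0 by decide, zero_smul]

lemma eq_of_add_eq_zero {M : Type*} [AddCommMonoid M] [Module (ZMod 2) M] {x y : M}
    (h : x + y = 0) : x = y := by
  have := congrArg (· + y) h
  simp only [add_assoc, addSelf, add_zero, zero_add] at this
  exact this


section A
variable (n : ℕ)

abbrev BIdx := Fin (n+1) × Fin 2 × ℕ
abbrev BMod := BIdx n →₀ ZMod 2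

noncomputable def opOf (f : BIdx n → BMod n) : Module.End (ZMod 2) (BMod n) :=
  Finsupp.lsum (ZMod 2) fun q => LinearMap.toSpanSingleton (ZMod 2) (BMod n) (f q)

lemma opOf_single (f : BIdx n → BMod n) (q : BIdx n) :
    opOf n f (Finsupp.single q 1) = f q := by
  simp [opOf]

lemma end_ext {F G : Module.End (ZMod 2) (BMod n)}
    (h : ∀ q : BIdx n, F (Finsupp.single q 1) = G (Finsupp.single q 1)) : F = G := by
  refine Finsupp.lhom_ext fun q b => ?_
  have : (Finsupp.single q b : BMod n) = b • Finsupp.single q 1 := by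
    rw [Finsupp.smul_single, smul_eq_mul, mul_one]
  rw [this, map_smul, map_smul, h]

noncomputable def bv (a : ℕ) (ε : Fin 2) (k : ℕ) : BMod n :=
  if h : a < n + 1 then Finsupp.single (⟨a, h⟩, ε, k) 1 else 0

lemma bv_eq (a : ℕ) (h : a < n+1) (ε : Fin 2) (k : ℕ) :
    Finsupp.single ((⟨a, h⟩ : Fin (n+1)), ε, k) (1 : ZMod 2) = bv n a ε k := by
  rw [bv, dif_pos h]

noncomputable def hFun : BIdx n → BMod n := fun q =>
  if (q.1 : ℕ) < n then bv n ((q.1:ℕ)+1) q.2.1 q.2.2 else 0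

noncomputable def sFun : BIdx n → BMod n := fun q =>
  if q.2.1 = 0 then
    bv n (q.1:ℕ) 1 q.2.2 + (if (q.1:ℕ) % 2 = 1 then bv n ((q.1:ℕ)-1) 0 q.2.2 else 0)
  else
    (if (q.1:ℕ) % 2 = 1 then bv n ((q.1:ℕ)-1) 1 q.2.2 else 0)

noncomputable def yFun : BIdx n → BMod n := fun q =>
  if q.2.1 = 0 then bv n (q.1:ℕ) 0 (q.2.2+1)
  else bv n (q.1:ℕ) 1 (q.2.2+1) +
    (if (q.1:ℕ) ≤ 1 then bv n ((q.1:ℕ)+n-1) 0 (q.2.2+2) else 0)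

noncomputable def hOp := opOf n (hFun n)
noncomputable def sOp := opOf n (sFun n)
noncomputable def yOp := opOf n (yFun n)

lemma hOp_bv (a : ℕ) (ε : Fin 2) (k : ℕ) :
    hOp n (bv n a ε k) = if a < n then bv n (a+1) ε k else 0 := by
  by_cases h : a < n + 1
  · rw [bv, dif_pos h, hOp, opOf_single, hFun]
  · rw [bv, dif_neg h, map_zero, if_neg (by omega)]

lemma sOp_bv0 (a k : ℕ) :
    sOp n (bv n a 0 k) =
      bv n a 1 k + (if a % 2 = 1 ∧ a ≤ n then bv n (a-1) 0 k else 0) := by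
  by_cases h : a < n + 1
  · rw [bv, dif_pos h, sOp, opOf_single, sFun]
    simp only [eq_self_iff_true, if_true]
    by_cases h2 : a % 2 = 1
    · rw [if_pos h2, if_pos (show a % 2 = 1 ∧ a ≤ n from ⟨h2, by omega⟩)]
    · rw [if_neg h2, if_neg (show ¬(a % 2 = 1 ∧ a ≤ n) from fun hc => h2 hc.1)]
  · rw [bv, dif_neg h, map_zero, bv, dif_neg h, if_neg (show ¬(a % 2 = 1 ∧ a ≤ n) from fun hc => by omega), add_zero]

lemma sOp_bv1 (a k : ℕ) :
    sOp n (bv n a 1 k) = (if a % 2 = 1 ∧ a ≤ n then bv n (a-1) 1 k else 0) := by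
  by_cases h : a < n + 1
  · rw [bv, dif_pos h, sOp, opOf_single, sFun]
    simp only [if_neg (show ¬((1:Fin 2) = 0) by decide)]
    by_cases h2 : a % 2 = 1
    · rw [if_pos h2, if_pos (show a % 2 = 1 ∧ a ≤ n from ⟨h2, by omega⟩)]
    · rw [if_neg h2, if_neg (show ¬(a % 2 = 1 ∧ a ≤ n) from fun hc => h2 hc.1)]
  · rw [bv, dif_neg h, map_zero, if_neg (show ¬(a % 2 = 1 ∧ a ≤ n) from fun hc => by omega)]

lemma yOp_bv0 (a k : ℕ) : yOp n (bv n a 0 k) = bv n a 0 (k+1) := by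
  by_cases h : a < n + 1
  · rw [bv, dif_pos h, yOp, opOf_single, yFun]
    simp only [eq_self_iff_true, if_true]
  · rw [bv, dif_neg h, map_zero, bv, dif_neg h]

lemma yOp_bv1 (hn1 : 1 ≤ n) (a k : ℕ) :
    yOp n (bv n a 1 k) =
      bv n a 1 (k+1) + (if a ≤ 1 then bv n (a+n-1) 0 (k+2) else 0) := by
  by_cases h : a < n + 1
  · rw [bv, dif_pos h, yOp, opOf_single, yFun]
    simp only [if_neg (show ¬((1:Fin 2) = 0) by decide)]
  · rw [bv, dif_neg h, map_zero, bv, dif_neg h, if_neg (show ¬(a ≤ 1) by omega), add_zero]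

lemma hOp_pow (m a : ℕ) (ε : Fin 2) (k : ℕ) :
    ((hOp n)^m) (bv n a ε k) = if a + m ≤ n then bv n (a+m) ε k else 0 := by
  induction m generalizing a with
  | zero =>
    simp only [pow_zero, Module.End.one_apply, add_zero]
    by_cases h : a ≤ n
    · rw [if_pos h]
    · rw [if_neg h, bv, dif_neg (by omega)]
  | succ m ih =>
    rw [pow_succ, Module.End.mul_apply, hOp_bv]
    by_cases h : a < n
    · rw [if_pos h, ih]
      by_cases h2 : a + 1 + m ≤ n
      · rw [if_pos h2, if_pos (by omega)]
        congr 1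
        omega
      · rw [if_neg h2, if_neg (by omega)]
    · rw [if_neg h, map_zero, if_neg (by omega)]

lemma addSelf' {M : Type*} [AddCommMonoid M] [Module (ZMod 2) M] (x y : M) :
    x + (x + y) = y := by rw [← add_assoc, addSelf, zero_add]

lemma relA_hs (hodd : n % 2 = 1) : hOp n * sOp n + sOp n * hOp n + 1 = 0 := by
  apply end_ext
  rintro ⟨⟨a, ha⟩, ε, k⟩
  have han : a ≤ n := by omega
  simp only [LinearMap.add_apply, Module.End.mul_apply, Module.End.one_apply,
    LinearMap.zero_apply, bv_eq]
  fin_cases ε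
  · simp only [Fin.mk_zero, Fin.mk_one, sOp_bv0, sOp_bv1, hOp_bv, yOp_bv0, map_add, apply_ite (hOp n),
      apply_ite (sOp n), map_zero, han, and_true]
    by_cases h1 : a < n <;> by_cases h2 : a % 2 = 1
    · simp only [h1, h2, if_true, if_false, show a - 1 < n from by omega,
        show ¬((a+1) % 2 = 1 ∧ a + 1 ≤ n) from by omega,
        show a - 1 + 1 = a from by omega, if_neg, add_zero]
      simp [add_comm, add_left_comm, add_assoc, addSelf, addSelf']
    · simp only [h1, h2, if_true, if_false,
        show ((a+1) % 2 = 1 ∧ a + 1 ≤ n) from by omega, add_zero, Nat.add_sub_cancel]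
      simp [add_comm, add_left_comm, add_assoc, addSelf, addSelf']
    · -- a = n, a odd (n odd)
      simp only [h1, h2, if_true, if_false, show a - 1 < n from by omega,
        show a - 1 + 1 = a from by omega, add_zero]
      simp [add_comm, add_left_comm, add_assoc, addSelf, addSelf']
    · omega
  · simp only [Fin.mk_zero, Fin.mk_one, sOp_bv0, sOp_bv1, hOp_bv, map_add, apply_ite (hOp n),
      apply_ite (sOp n), map_zero, han, and_true]
    by_cases h1 : a < n <;> by_cases h2 : a % 2 = 1
    · simp only [h1, h2, if_true, if_false, show a - 1 < n from by omega,
        show ¬((a+1) % 2 = 1 ∧ a + 1 ≤ n) from by omega,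
        show a - 1 + 1 = a from by omega, if_neg, add_zero]
      simp [add_comm, add_left_comm, add_assoc, addSelf, addSelf']
    · simp only [h1, h2, if_true, if_false,
        show ((a+1) % 2 = 1 ∧ a + 1 ≤ n) from by omega, add_zero, Nat.add_sub_cancel]
      simp [add_comm, add_left_comm, add_assoc, addSelf, addSelf']
    · simp only [h1, h2, if_true, if_false, show a - 1 < n from by omega,
        show a - 1 + 1 = a from by omega, add_zero]
      simp [add_comm, add_left_comm, add_assoc, addSelf, addSelf']
    · omega

lemma relA_hy (hn1 : 1 ≤ n) : hOp n * yOp n + yOp n * hOp n = 0 := by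
  apply end_ext
  rintro ⟨⟨a, ha⟩, ε, k⟩
  have han : a ≤ n := by omega
  simp only [LinearMap.add_apply, Module.End.mul_apply, LinearMap.zero_apply, bv_eq]
  fin_cases ε
  · simp only [Fin.mk_zero, yOp_bv0, hOp_bv, apply_ite (yOp n), map_zero]
    by_cases h1 : a < n
    · simp [h1, yOp_bv0, addSelf]
    · simp [h1, addSelf]
  · simp only [Fin.mk_one, yOp_bv1 n hn1, hOp_bv, map_add, apply_ite (yOp n),
      apply_ite (hOp n), map_zero]
    by_cases h0 : a = 0
    · subst h0
      simp only [show (0:ℕ) < n by omega, show (0:ℕ) ≤ 1 by omega,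
        show 0+n-1 < n by omega, show (0:ℕ)+1 ≤ 1 by omega, if_true, yOp_bv1 n hn1,
        show 0+n-1+1 = 0+1+n-1 by omega]
      simp [add_comm, add_left_comm, add_assoc, addSelf, addSelf']
    · by_cases h2 : a ≤ 1
      · by_cases h1 : a < n
        · simp only [h1, h2, if_true, show ¬(a+n-1 < n) by omega,
            show ¬(a+1 ≤ 1) by omega, if_false, yOp_bv1 n hn1, add_zero, map_zero]
          simp [add_comm, add_left_comm, add_assoc, addSelf, addSelf']
        · simp only [h1, h2, if_true, if_false, show ¬(a+n-1 < n) by omega, map_zero,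
            add_zero]
      · by_cases h1 : a < n
        · simp only [h1, h2, if_true, if_false, yOp_bv1 n hn1, add_zero, map_zero,
            show ¬(a+1 ≤ 1) by omega]
          simp [addSelf]
        · simp only [h1, h2, if_false, map_zero, add_zero]

lemma relA_s2 : sOp n * sOp n = 0 := by
  apply end_ext
  rintro ⟨⟨a, ha⟩, ε, k⟩
  have han : a ≤ n := by omega
  simp only [Module.End.mul_apply, LinearMap.zero_apply, bv_eq]
  fin_cases ε
  · simp only [Fin.mk_zero, sOp_bv0, sOp_bv1, map_add, apply_ite (sOp n), map_zero,
      han, and_true]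
    by_cases h2 : a % 2 = 1
    · simp only [h2, if_true, sOp_bv0, sOp_bv1, show ¬((a-1) % 2 = 1 ∧ a - 1 ≤ n) by omega,
        if_false, add_zero, han, and_true]
      simp [addSelf]
    · simp [h2, sOp_bv1, han, addSelf]
  · simp only [Fin.mk_one, sOp_bv1, apply_ite (sOp n), map_zero, han, and_true]
    by_cases h2 : a % 2 = 1
    · simp only [h2, if_true, sOp_bv1, show ¬((a-1) % 2 = 1 ∧ a - 1 ≤ n) by omega, if_false]
    · simp [h2]

lemma relA_hpow : hOp n ^ (n+1) = 0 := by
  apply end_ext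
  rintro ⟨⟨a, ha⟩, ε, k⟩
  simp only [LinearMap.zero_apply, bv_eq, hOp_pow, show ¬(a + (n+1) ≤ n) by omega, if_false]

lemma relA_sy (hodd : n % 2 = 1) :
    sOp n * yOp n + yOp n * sOp n + hOp n ^ (n-1) * yOp n ^ 2 = 0 := by
  have hn1 : 1 ≤ n := by omega
  apply end_ext
  rintro ⟨⟨a, ha⟩, ε, k⟩
  have han : a ≤ n := by omega
  simp only [LinearMap.add_apply, Module.End.mul_apply, LinearMap.zero_apply, bv_eq,
    pow_two]
  fin_cases ε
  · simp only [Fin.mk_zero, yOp_bv0, sOp_bv0, yOp_bv1 n hn1, map_add,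
      apply_ite (yOp n), apply_ite (sOp n), map_zero, hOp_pow,
      show a + (n-1) = a+n-1 by omega,
      show (a+n-1 ≤ n) = (a ≤ 1) by simp only [eq_iff_iff]; omega]
    by_cases h2 : a ≤ 1 <;> by_cases h3 : a % 2 = 1 ∧ a ≤ n <;>
      simp [h2, h3, yOp_bv0, add_comm, add_left_comm, add_assoc, addSelf, addSelf']
  · simp only [Fin.mk_one, yOp_bv1 n hn1, sOp_bv1, sOp_bv0, map_add,
      apply_ite (yOp n), apply_ite (sOp n), map_zero, hOp_pow]
    by_cases h0 : a = 0
    · subst h0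
      simp only [show ¬((0:ℕ) % 2 = 1 ∧ 0 ≤ n) by omega, if_false, map_zero,
        show (0:ℕ) ≤ 1 by omega, if_true, yOp_bv0, yOp_bv1 n hn1,
        show ((n-1) % 2 = 1) = False by simp only [eq_iff_iff, iff_false]; omega, Nat.sub_le, and_true, zero_add,
        show (0 + (n-1) ≤ n) = True by simp only [eq_iff_iff, iff_true]; omega,
        show 0 + (n-1) = 0+n-1 by omega, add_zero, zero_add, map_add]
      try simp [add_comm, add_left_comm, add_assoc, addSelf, addSelf', hOp_pow]
    · by_cases h2 : a ≤ 1
      · have h1 : a = 1 := by omega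
        subst h1
        simp only [show ((1:ℕ) % 2 = 1 ∧ 1 ≤ n) by omega, if_true,
          show (1:ℕ) ≤ 1 by omega, show (1:ℕ) - 1 ≤ 1 by omega,
          yOp_bv0, yOp_bv1 n hn1, map_add,
          show ((1+n-1) % 2 = 1 ∧ 1+n-1 ≤ n) by omega,
          show (1 + (n-1) ≤ n) = True by simp only [eq_iff_iff, iff_true]; omega,
          show 1 + (n-1) = 1+n-1 by omega,
          show 1+n-1-1 = 1-1+n-1 by omega, apply_ite (hOp n ^ (n-1)), map_zero, hOp_pow]
        simp [add_comm, add_left_comm, add_assoc, addSelf, addSelf', hOp_pow,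
          show 1 + (n-1) = 1+n-1 by omega]
      · by_cases h3 : a % 2 = 1
        · simp only [show (a % 2 = 1 ∧ a ≤ n) = True by simp [h3, han],
            show (a ≤ 1) = False by simp only [eq_iff_iff, iff_false]; omega, show (a - 1 ≤ 1) = False by simp only [eq_iff_iff, iff_false]; omega,
            if_true, if_false, map_zero, add_zero, zero_add, yOp_bv1 n hn1, map_add,
            show (a + (n-1) ≤ n) = False by simp only [eq_iff_iff, iff_false]; omega, hOp_pow]
          try simp [addSelf]
        · simp only [show (a % 2 = 1 ∧ a ≤ n) = False by simp [h3],
            show (a ≤ 1) = False by simp only [eq_iff_iff, iff_false]; omega, if_false, map_zero, add_zero, zero_add,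
            yOp_bv1 n hn1, map_add, show (a + (n-1) ≤ n) = False by simp only [eq_iff_iff, iff_false]; omega, hOp_pow]
          try simp [addSelf]


noncomputable def Trep : FreeHSY →ₐ[ZMod 2] Module.End (ZMod 2) (BMod n) :=
  FreeAlgebra.lift (ZMod 2) ![hOp n, sOp n, yOp n]

lemma Trep_rel (hodd : n % 2 = 1) ⦃x y : FreeHSY⦄ (h : pathRel n x y) :
    Trep n x = Trep n y := by
  have hn1 : 1 ≤ n := by omega
  cases h with
  | hs =>
    simp only [map_add, map_mul, map_one, map_zero, genH, genS, Trep,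
      FreeAlgebra.lift_ι_apply, Matrix.cons_val_zero, Matrix.cons_val_one, Matrix.head_cons]
    exact relA_hs n hodd
  | hy =>
    simp only [map_add, map_mul, map_zero, genH, genY, Trep,
      FreeAlgebra.lift_ι_apply, Matrix.cons_val_zero, Matrix.cons_val_one, Matrix.head_cons]
    have := relA_hy n hn1
    simpa using this
  | sy =>
    simp only [map_add, map_mul, map_pow, map_zero, genH, genS, genY, Trep,
      FreeAlgebra.lift_ι_apply, Matrix.cons_val_zero, Matrix.cons_val_one, Matrix.head_cons]
    have := relA_sy n hodd
    simpa using this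
  | s2 =>
    simp only [map_mul, map_zero, genS, Trep,
      FreeAlgebra.lift_ι_apply, Matrix.cons_val_one, Matrix.head_cons]
    exact relA_s2 n
  | hpow =>
    simp only [map_pow, map_zero, genH, Trep, FreeAlgebra.lift_ι_apply,
      Matrix.cons_val_zero]
    exact relA_hpow n

noncomputable def Tbar (hodd : n % 2 = 1) :
    PathAlg n →ₐ[ZMod 2] Module.End (ZMod 2) (BMod n) :=
  RingQuot.liftAlgHom (ZMod 2) ⟨Trep n, Trep_rel n hodd⟩

lemma yOp_pow (m a k : ℕ) : ((yOp n)^m) (bv n a 0 k) = bv n a 0 (k+m) := by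
  induction m generalizing k with
  | zero => rw [pow_zero, Module.End.one_apply, Nat.add_zero]
  | succ m ih =>
    rw [pow_succ', Module.End.mul_apply, ih, yOp_bv0, show k+m+1 = k+(m+1) by omega]

lemma Tbar_mono (hodd : n % 2 = 1) (q : Fin (n+1) × Fin 2 × ℕ) :
    Tbar n hodd (RingQuot.mkAlgHom (ZMod 2) (pathRel n)
        (genH ^ (q.1 : ℕ) * genS ^ (q.2.1 : ℕ) * genY ^ q.2.2)) (bv n 0 0 0) =
      Finsupp.single q 1 := by
  have hn1 : 1 ≤ n := by omega
  obtain ⟨⟨a, ha⟩, ε, k⟩ := q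
  rw [Tbar, RingQuot.liftAlgHom_mkAlgHom_apply]
  simp only [map_mul, map_pow, genH, genS, genY, Trep, FreeAlgebra.lift_ι_apply]
  rw [show ((![hOp n, sOp n, yOp n] : Fin 3 → Module.End (ZMod 2) (BMod n)) 0) = hOp n
      from rfl,
    show ((![hOp n, sOp n, yOp n] : Fin 3 → Module.End (ZMod 2) (BMod n)) 1) = sOp n
      from rfl,
    show ((![hOp n, sOp n, yOp n] : Fin 3 → Module.End (ZMod 2) (BMod n)) 2) = yOp n
      from rfl,
    Module.End.mul_apply, Module.End.mul_apply, yOp_pow, zero_add]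
  fin_cases ε
  · rw [show (((⟨0, by omega⟩ : Fin 2) : Fin 2) : ℕ) = 0 from rfl, pow_zero,
      Module.End.one_apply, hOp_pow, if_pos (show 0 + a ≤ n by omega),
      show 0 + a = a by omega, bv, dif_pos (by omega : a < n + 1)]
    rfl
  · rw [show (((⟨1, by omega⟩ : Fin 2) : Fin 2) : ℕ) = 1 from rfl, pow_one, sOp_bv0,
      if_neg (show ¬((0:ℕ) % 2 = 1 ∧ 0 ≤ n) by omega), add_zero, hOp_pow,
      if_pos (show 0 + a ≤ n by omega), show 0 + a = a by omega, bv,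
      dif_pos (by omega : a < n + 1)]
    rfl

end A

section B
variable (n : ℕ)

noncomputable def ph : PathAlg n := RingQuot.mkAlgHom (ZMod 2) (pathRel n) genH
noncomputable def ps : PathAlg n := RingQuot.mkAlgHom (ZMod 2) (pathRel n) genS
noncomputable def py : PathAlg n := RingQuot.mkAlgHom (ZMod 2) (pathRel n) genY

lemma rel_hs : ph n * ps n + ps n * ph n + 1 = 0 := by
  have := RingQuot.mkAlgHom_rel (ZMod 2) (pathRel.hs (n := n))
  simpa [ph, ps, map_add, map_mul, map_one] using this

lemma rel_hy : ph n * py n + py n * ph n = 0 := by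
  have := RingQuot.mkAlgHom_rel (ZMod 2) (pathRel.hy (n := n))
  simpa [ph, py, map_add, map_mul] using this

lemma rel_sy : ps n * py n + py n * ps n + ph n ^ (n-1) * py n ^ 2 = 0 := by
  have := RingQuot.mkAlgHom_rel (ZMod 2) (pathRel.sy (n := n))
  simpa [ph, ps, py, map_add, map_mul, map_pow] using this

lemma rel_s2 : ps n * ps n = 0 := by
  have := RingQuot.mkAlgHom_rel (ZMod 2) (pathRel.s2 (n := n))
  simpa [ps, map_mul] using this

lemma rel_hpow : ph n ^ (n+1) = 0 := by
  have := RingQuot.mkAlgHom_rel (ZMod 2) (pathRel.hpow (n := n))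
  simpa [ph, map_pow] using this

end B

section C
variable (n : ℕ)

lemma hy_comm : py n * ph n = ph n * py n :=
  (eq_of_add_eq_zero (rel_hy n)).symm

lemma ypow_h (k : ℕ) : py n ^ k * ph n = ph n * py n ^ k := by
  induction k with
  | zero => simp
  | succ k ih =>
    rw [pow_succ, mul_assoc, hy_comm, ← mul_assoc, ih, mul_assoc]

lemma ypow_hpow (m k : ℕ) : py n ^ k * ph n ^ m = ph n ^ m * py n ^ k := by
  induction m with
  | zero => simp
  | succ m ih =>
    rw [pow_succ, ← mul_assoc, ih, mul_assoc, ypow_h, mul_assoc]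

lemma sh : ps n * ph n = ph n * ps n + 1 :=
  eq_of_add_eq_zero (by rw [← rel_hs n]; abel)

lemma sh2 : ps n * ph n ^ 2 = ph n ^ 2 * ps n := by
  rw [pow_two, ← mul_assoc, sh, add_mul, one_mul, mul_assoc, sh, mul_add, mul_one,
    ← mul_assoc, add_assoc, addSelf, add_zero]

lemma sh_even (j : ℕ) : ps n * ph n ^ (2*j) = ph n ^ (2*j) * ps n := by
  induction j with
  | zero => simp
  | succ j ih =>
    have : 2 * (j+1) = 2*j + 2 := by ring
    rw [this, pow_add, ← mul_assoc, ih, mul_assoc, sh2, mul_assoc]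

lemma ys : py n * ps n = ps n * py n + ph n ^ (n-1) * py n ^ 2 :=
  eq_of_add_eq_zero (by rw [← rel_sy n]; abel)

lemma ypow_s (k : ℕ) :
    py n ^ k * ps n = ps n * py n ^ k + (k : ZMod 2) • (ph n ^ (n-1) * py n ^ (k+1)) := by
  induction k with
  | zero => simp
  | succ k ih =>
    rw [pow_succ, mul_assoc, ys, mul_add, ← mul_assoc, ih, add_mul, smul_mul_assoc,
      mul_assoc, ← pow_succ]
    have h1 : py n ^ k * (ph n ^ (n-1) * py n ^ 2) = ph n ^ (n-1) * py n ^ (k+2) := by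
      rw [← mul_assoc, ypow_hpow, mul_assoc, ← pow_add]
    rw [h1]
    have h2 : ph n ^ (n-1) * py n ^ (k+1) * py n = ph n ^ (n-1) * py n ^ (k+2) := by
      rw [mul_assoc, ← pow_succ]
    rw [h2, Nat.cast_add, Nat.cast_one, add_smul, one_smul, add_assoc]

end C

section D
variable (n : ℕ)

lemma hpow_eq_zero {m : ℕ} (hm : n + 1 ≤ m) : ph n ^ m = 0 := by
  have : m = (n+1) + (m - (n+1)) := by omega
  rw [this, pow_add, rel_hpow, zero_mul]

lemma spow_eq_zero {m : ℕ} (hm : 2 ≤ m) : ps n ^ m = 0 := by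
  have : m = 2 + (m - 2) := by omega
  rw [this, pow_add, pow_two, rel_s2, zero_mul]

noncomputable def fam : Fin (n+1) × Fin 2 × ℕ → PathAlg n := fun q =>
  RingQuot.mkAlgHom (ZMod 2) (pathRel n)
    (genH ^ (q.1 : ℕ) * genS ^ (q.2.1 : ℕ) * genY ^ q.2.2)

lemma fam_eq (q : Fin (n+1) × Fin 2 × ℕ) :
    fam n q = ph n ^ (q.1 : ℕ) * ps n ^ (q.2.1 : ℕ) * py n ^ q.2.2 := by
  simp [fam, ph, ps, py, map_mul, map_pow]

noncomputable def P : Submodule (ZMod 2) (PathAlg n) :=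
  Submodule.span (ZMod 2) (Set.range (fam n))

variable {n}

lemma memP (a ε k : ℕ) : ph n ^ a * ps n ^ ε * py n ^ k ∈ P n := by
  by_cases ha : a ≤ n
  · by_cases he : ε ≤ 1
    · have : ph n ^ a * ps n ^ ε * py n ^ k = fam n (⟨a, by omega⟩, ⟨ε, by omega⟩, k) := by
        rw [fam_eq]
      rw [this]
      exact Submodule.subset_span (Set.mem_range_self _)
    · rw [spow_eq_zero (n := n) (show 2 ≤ ε by omega), mul_zero, zero_mul]
      exact Submodule.zero_mem _
  · rw [hpow_eq_zero (n := n) (show n+1 ≤ a by omega), zero_mul, zero_mul]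
    exact Submodule.zero_mem _

lemma mulY (a ε k : ℕ) : (ph n ^ a * ps n ^ ε * py n ^ k) * py n ∈ P n := by
  rw [mul_assoc, ← pow_succ]
  exact memP a ε (k+1)

lemma mulH (a ε k : ℕ) (hε : ε ≤ 1) : (ph n ^ a * ps n ^ ε * py n ^ k) * ph n ∈ P n := by
  rw [mul_assoc, ypow_h, ← mul_assoc, mul_assoc (ph n ^ a)]
  rcases Nat.le_one_iff_eq_zero_or_eq_one.mp hε with rfl | rfl
  · rw [pow_zero, one_mul, ← pow_succ]
    simpa using memP (n := n) (a+1) 0 k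
  · rw [pow_one, sh, mul_add, mul_one, add_mul, ← mul_assoc, ← pow_succ]
    refine Submodule.add_mem _ ?_ ?_
    · simpa using memP (n := n) (a+1) 1 k
    · simpa using memP (n := n) a 0 k

lemma mulS (hodd : n % 2 = 1) (a ε k : ℕ) (hε : ε ≤ 1) :
    (ph n ^ a * ps n ^ ε * py n ^ k) * ps n ∈ P n := by
  rw [mul_assoc, ypow_s, mul_add]
  refine Submodule.add_mem _ ?_ ?_
  · rcases Nat.le_one_iff_eq_zero_or_eq_one.mp hε with rfl | rfl
    · rw [pow_zero, mul_one, ← mul_assoc]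
      simpa using memP (n := n) a 1 k
    · rw [pow_one, ← mul_assoc, mul_assoc (ph n ^ a), rel_s2, mul_zero, zero_mul]
      exact Submodule.zero_mem _
  · rw [mul_smul_comm]
    refine Submodule.smul_mem _ _ ?_
    rcases Nat.le_one_iff_eq_zero_or_eq_one.mp hε with rfl | rfl
    · rw [pow_zero, mul_one, ← mul_assoc, ← pow_add]
      simpa using memP (n := n) (a + (n-1)) 0 (k+1)
    · have hc : ps n * ph n ^ (n-1) = ph n ^ (n-1) * ps n := by
        have h2 : n - 1 = 2 * ((n-1)/2) := by omega
        rw [h2, sh_even]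
      rw [pow_one, mul_assoc, ← mul_assoc (ps n), hc, ← mul_assoc, ← mul_assoc, ← pow_add]
      simpa using memP (n := n) (a + (n-1)) 1 (k+1)

lemma P_eq_top (hodd : n % 2 = 1) : P n = ⊤ := by
  have key : ∀ x : FreeHSY, ∀ p ∈ P n, p * RingQuot.mkAlgHom (ZMod 2) (pathRel n) x ∈ P n := by
    intro x
    induction x using FreeAlgebra.induction with
    | grade0 r =>
      intro p hp
      rw [AlgHom.commutes, ← Algebra.commutes, ← Algebra.smul_def]
      exact Submodule.smul_mem _ _ hp
    | grade1 i =>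
      intro p hp
      refine Submodule.span_induction ?_ ?_ ?_ ?_ hp
      · rintro _ ⟨q, rfl⟩
        obtain ⟨b, ε, k⟩ := q
        rw [fam_eq]
        have hε : (ε : ℕ) ≤ 1 := by omega
        fin_cases i
        · exact mulH _ _ _ hε
        · exact mulS hodd _ _ _ hε
        · exact mulY _ _ _
      · simp
      · intro x y _ _ hx hy
        rw [add_mul]; exact Submodule.add_mem _ hx hy
      · intro c x _ hx
        rw [smul_mul_assoc]; exact Submodule.smul_mem _ _ hx
    | mul x y ihx ihy =>
      intro p hp
      rw [map_mul, ← mul_assoc]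
      exact ihy _ (ihx _ hp)
    | add x y ihx ihy =>
      intro p hp
      rw [map_add, mul_add]
      exact Submodule.add_mem _ (ihx _ hp) (ihy _ hp)
  rw [eq_top_iff]
  rintro z -
  obtain ⟨x, rfl⟩ := RingQuot.mkAlgHom_surjective (ZMod 2) (pathRel n) z
  have h1 : (1 : PathAlg n) ∈ P n := by
    have := memP (n := n) 0 0 0
    simpa using this
  simpa using key x 1 h1

end D


/-- For `n ≡ 1 (mod 4)`, the images in `A` of the monomials `H^a S^ε Y^k`, for
`0 ≤ a ≤ n`, `ε ∈ {0,1}`, `k ≥ 0`, form a basis of `A` as a `ℤ/2`-vector space. -/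
theorem stmt_14 (n : ℕ) (hn : n % 4 = 1) :
    LinearIndependent (ZMod 2)
      (fun q : Fin (n + 1) × Fin 2 × ℕ =>
        RingQuot.mkAlgHom (ZMod 2) (pathRel n)
          (genH ^ (q.1 : ℕ) * genS ^ (q.2.1 : ℕ) * genY ^ q.2.2)) ∧
    Submodule.span (ZMod 2)
      (Set.range (fun q : Fin (n + 1) × Fin 2 × ℕ =>
        RingQuot.mkAlgHom (ZMod 2) (pathRel n)
          (genH ^ (q.1 : ℕ) * genS ^ (q.2.1 : ℕ) * genY ^ q.2.2))) = ⊤ := by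
  have hodd : n % 2 = 1 := by omega
  constructor
  · have hL : LinearIndependent (ZMod 2)
        (fun q : Fin (n+1) × Fin 2 × ℕ => (Finsupp.single q 1 : BMod n)) := by
      simpa using
        (Finsupp.basisSingleOne (R := ZMod 2) (ι := Fin (n+1) × Fin 2 × ℕ)).linearIndependent
    refine LinearIndependent.of_comp
      ((LinearMap.applyₗ (bv n 0 0 0)).comp (Tbar n hodd).toLinearMap) ?_
    have hco : (((LinearMap.applyₗ (bv n 0 0 0)).comp (Tbar n hodd).toLinearMap) ∘
        (fun q : Fin (n + 1) × Fin 2 × ℕ =>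
          RingQuot.mkAlgHom (ZMod 2) (pathRel n)
            (genH ^ (q.1 : ℕ) * genS ^ (q.2.1 : ℕ) * genY ^ q.2.2))) =
        fun q : Fin (n+1) × Fin 2 × ℕ => (Finsupp.single q 1 : BMod n) := by
      funext q
      simpa using Tbar_mono n hodd q
    rw [hco]
    exact hL
  · exact P_eq_top hodd
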